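/- The number of solid standard Young tableaux of the cylindrical shape (2,1,1)×{1,...,n} equals the number of lattice paths from (0,0,0,0) to (n,n,n,n) in ℤ⁴ using positive unit steps such that every visited point (x₁,x₂,x₃,x₄) satisfies x₁ ≥ x₂ ≥ x₃ and x₁ ≥ x₄. -/

import Mathlib

/-- A solid (3D) shape: a finite down-closed subset of `ℕ³`. -/
def DownClosed (S : Finset (ℕ × ℕ × ℕ)) : Prop :=
  ∀ a ∈ S, ∀ b : ℕ × ℕ × ℕ, b.1 ≤ a.1 → b.2.1 ≤ a.2.1 → b.2.2 ≤ a.2.2 → b ∈ S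

/-- A corner of a solid shape: a box none of whose three forward neighbors is in `S`. -/
def IsCorner3 (S : Finset (ℕ × ℕ × ℕ)) (c : ℕ × ℕ × ℕ) : Prop :=
  c ∈ S ∧ (c.1 + 1, c.2.1, c.2.2) ∉ S ∧ (c.1, c.2.1 + 1, c.2.2) ∉ S ∧
    (c.1, c.2.1, c.2.2 + 1) ∉ S

/-- `f` is a solid standard Young tableau of shape `S`: a bijection from the boxes
of `S` to `{1,…,|S|}` (modeled as `Fin S.card`), strictly increasing in each of the
three coordinate directions. -/
def IsSSYT3 (S : Finset (ℕ × ℕ × ℕ)) (f : S → Fin S.card) : Prop :=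
  Function.Bijective f ∧
  (∀ a b : S, (↑a : ℕ × ℕ × ℕ).2 = (↑b : ℕ × ℕ × ℕ).2 →
      (↑a : ℕ × ℕ × ℕ).1 < (↑b : ℕ × ℕ × ℕ).1 → f a < f b) ∧
  (∀ a b : S, (↑a : ℕ × ℕ × ℕ).1 = (↑b : ℕ × ℕ × ℕ).1 →
      (↑a : ℕ × ℕ × ℕ).2.2 = (↑b : ℕ × ℕ × ℕ).2.2 →
      (↑a : ℕ × ℕ × ℕ).2.1 < (↑b : ℕ × ℕ × ℕ).2.1 → f a < f b) ∧
  (∀ a b : S, (↑a : ℕ × ℕ × ℕ).1 = (↑b : ℕ × ℕ × ℕ).1 →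
      (↑a : ℕ × ℕ × ℕ).2.1 = (↑b : ℕ × ℕ × ℕ).2.1 →
      (↑a : ℕ × ℕ × ℕ).2.2 < (↑b : ℕ × ℕ × ℕ).2.2 → f a < f b)

/-- The number of solid standard Young tableaux of shape `S`. -/
noncomputable def ssyt3Count (S : Finset (ℕ × ℕ × ℕ)) : ℕ :=
  Nat.card {f : S → Fin S.card // IsSSYT3 S f}

/-- For a word `w` of steps (each increasing one of `d` coordinates by 1),
`cnt w i j` is the value of coordinate `j` after the first `i` steps. -/
def cnt {m d : ℕ} (w : Fin m → Fin d) (i : ℕ) (j : Fin d) : ℕ :=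
  (Finset.univ.filter (fun t : Fin m => (t : ℕ) < i ∧ w t = j)).card

/-- The cylindrical shape `(2,1,1) × {1,…,n}`: boxes `(i,j,k)` with `(i,j)` in
the diagram `{(0,0),(0,1),(1,0),(2,0)}` of the partition `(2,1,1)` and `k < n`. -/
def cylShape211 (n : ℕ) : Finset (ℕ × ℕ × ℕ) :=
  (Finset.range 3 ×ˢ Finset.range 2 ×ˢ Finset.range n).filter
    (fun p => (p.1, p.2.1) ∈ ({(0, 0), (0, 1), (1, 0), (2, 0)} : Finset (ℕ × ℕ)))

namespace SSYTAux


def col : Fin 4 → ℕ × ℕ := ![(0,0),(1,0),(2,0),(0,1)]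

def box (c : Fin 4) (k : ℕ) : ℕ × ℕ × ℕ := ((col c).1, (col c).2, k)

def colIdx (p : ℕ × ℕ × ℕ) : Fin 4 :=
  if p.2.1 = 0 then (if p.1 = 0 then 0 else if p.1 = 1 then 1 else 2) else 3

lemma box_mem {n : ℕ} {c : Fin 4} {k : ℕ} : box c k ∈ cylShape211 n ↔ k < n := by
  fin_cases c <;>
    simp [box, col, cylShape211, Finset.mem_filter, Finset.mem_product, Finset.mem_range]

lemma colIdx_box (c : Fin 4) (k : ℕ) : colIdx (box c k) = c := by
  fin_cases c <;> simp [box, col, colIdx]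

lemma eq_box_of_mem {n : ℕ} {p : ℕ × ℕ × ℕ} (hp : p ∈ cylShape211 n) :
    p.2.2 < n ∧ box (colIdx p) p.2.2 = p := by
  obtain ⟨p1, p2, p3⟩ := p
  simp [cylShape211, Finset.mem_filter, Finset.mem_product, Finset.mem_range,
    Finset.mem_insert, Prod.ext_iff] at hp
  obtain ⟨⟨h1, h2, h3⟩, h4⟩ := hp
  refine ⟨h3, ?_⟩
  rcases h4 with ⟨rfl, rfl⟩ | ⟨rfl, rfl⟩ | ⟨rfl, rfl⟩ | ⟨rfl, rfl⟩ <;>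
    simp [box, col, colIdx]

lemma box_inj {c c' : Fin 4} {k k' : ℕ} (h : box c k = box c' k') : c = c' ∧ k = k' := by
  have hc : colIdx (box c k) = colIdx (box c' k') := by rw [h]
  rw [colIdx_box, colIdx_box] at hc
  refine ⟨hc, ?_⟩
  have := congrArg (fun p : ℕ × ℕ × ℕ => p.2.2) h
  simpa [box] using this

variable (n : ℕ)

def dec : Fin 4 × Fin n → (cylShape211 n) :=
  fun x => ⟨box x.1 x.2, box_mem.2 x.2.isLt⟩

lemma dec_bij : Function.Bijective (dec n) := by
  constructor
  · rintro ⟨c, k⟩ ⟨c', k'⟩ h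
    have h' : box c (k : ℕ) = box c' (k' : ℕ) := congrArg Subtype.val h
    obtain ⟨h1, h2⟩ := box_inj h'
    exact Prod.ext h1 (Fin.ext h2)
  · rintro ⟨p, hp⟩
    obtain ⟨hlt, hbox⟩ := eq_box_of_mem hp
    exact ⟨(colIdx p, ⟨p.2.2, hlt⟩), Subtype.ext hbox⟩

noncomputable def dSh : Fin 4 × Fin n ≃ (cylShape211 n) := Equiv.ofBijective _ (dec_bij n)

lemma card_shape : (cylShape211 n).card = 4 * n := by
  have := Fintype.card_congr (dSh n)
  simpa using this.symm


variable {m d : ℕ} (w : Fin m → Fin d)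

lemma cnt_mono {i i' : ℕ} (h : i ≤ i') (c : Fin d) : cnt w i c ≤ cnt w i' c := by
  apply Finset.card_le_card
  intro t ht
  simp only [Finset.mem_filter] at *
  exact ⟨ht.1, ht.2.1.trans_le h, ht.2.2⟩

lemma cnt_succ_eq (t : Fin m) {c : Fin d} (h : w t = c) :
    cnt w ((t : ℕ) + 1) c = cnt w (t : ℕ) c + 1 := by
  unfold cnt
  rw [show (Finset.univ.filter (fun s : Fin m => (s : ℕ) < (t : ℕ) + 1 ∧ w s = c)) =
      insert t (Finset.univ.filter (fun s : Fin m => (s : ℕ) < (t : ℕ) ∧ w s = c)) from ?_]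
  · rw [Finset.card_insert_of_notMem (by simp)]
  · ext s
    simp only [Finset.mem_filter, Finset.mem_insert, Finset.mem_univ, true_and]
    constructor
    · rintro ⟨h1, h2⟩
      rcases Nat.lt_succ_iff_lt_or_eq.1 h1 with h1 | h1
      · exact Or.inr ⟨h1, h2⟩
      · exact Or.inl (Fin.ext h1)
    · rintro (rfl | ⟨h1, h2⟩)
      · exact ⟨Nat.lt_succ_self _, h⟩
      · exact ⟨Nat.lt_succ_of_lt h1, h2⟩

lemma cnt_succ_ne (t : Fin m) {c : Fin d} (h : w t ≠ c) :
    cnt w ((t : ℕ) + 1) c = cnt w (t : ℕ) c := by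
  unfold cnt
  congr 1
  ext s
  simp only [Finset.mem_filter, Finset.mem_univ, true_and]
  constructor
  · rintro ⟨h1, h2⟩
    rcases Nat.lt_succ_iff_lt_or_eq.1 h1 with h1 | h1
    · exact ⟨h1, h2⟩
    · cases Fin.ext h1; exact absurd h2 h
  · rintro ⟨h1, h2⟩; exact ⟨Nat.lt_succ_of_lt h1, h2⟩

lemma cnt_lt_cnt {t t' : Fin m} {c : Fin d} (h' : w t = c) (hlt : t < t') :
    cnt w (t : ℕ) c + 1 ≤ cnt w (t' : ℕ) c := by
  have h1 := cnt_succ_eq w t h'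
  have h2 := cnt_mono w (show (t : ℕ) + 1 ≤ (t' : ℕ) from hlt) c
  omega


variable {n : ℕ} (w : Fin (4 * n) → Fin 4)


lemma cnt_pos_lt (hn : ∀ j : Fin 4, cnt w (4 * n) j = n) (t : Fin (4 * n)) :
    cnt w (t : ℕ) (w t) < n := by
  have h1 := cnt_succ_eq w t rfl
  have h2 : cnt w ((t : ℕ) + 1) (w t) ≤ cnt w (4 * n) (w t) := cnt_mono w t.isLt (w t)
  rw [hn] at h2; omega

noncomputable def wE (hn : ∀ j : Fin 4, cnt w (4 * n) j = n) :
    Fin (4 * n) ≃ Fin 4 × Fin n := by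
  refine Equiv.ofBijective (fun t => (w t, ⟨cnt w (t : ℕ) (w t), cnt_pos_lt w hn t⟩)) ?_
  rw [Fintype.bijective_iff_injective_and_card]
  refine ⟨?_, by simp⟩
  intro t t' h
  by_contra hne
  simp only [Prod.mk.injEq, Fin.mk.injEq] at h
  obtain ⟨hw, hcnt⟩ := h
  have hvne : (t : ℕ) ≠ (t' : ℕ) := fun hv => hne (Fin.ext hv)
  rcases hvne.lt_or_gt with hlt | hlt
  · have h1 := cnt_succ_eq w t rfl
    have h2 := cnt_mono w (show (t : ℕ) + 1 ≤ (t' : ℕ) from hlt) (w t)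
    rw [hw] at h1 h2 hcnt
    omega
  · have h1 := cnt_succ_eq w t' rfl
    have h2 := cnt_mono w (show (t' : ℕ) + 1 ≤ (t : ℕ) from hlt) (w t')
    rw [← hw] at h1 h2 hcnt
    omega

lemma wE_apply (hn : ∀ j : Fin 4, cnt w (4 * n) j = n) (t : Fin (4 * n)) :
    wE w hn t = (w t, ⟨cnt w (t : ℕ) (w t), cnt_pos_lt w hn t⟩) := rfl

lemma psi_spec (hn : ∀ j : Fin 4, cnt w (4 * n) j = n) (c : Fin 4) (k : Fin n) :
    w ((wE w hn).symm (c, k)) = c ∧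
      cnt w (((wE w hn).symm (c, k) : Fin (4 * n)) : ℕ) c = (k : ℕ) := by
  have h := (wE w hn).apply_symm_apply (c, k)
  rw [wE_apply, Prod.mk.injEq] at h
  obtain ⟨h1, h2⟩ := h
  refine ⟨h1, ?_⟩
  have h3 : cnt w (((wE w hn).symm (c, k) : Fin (4 * n)) : ℕ)
      (w ((wE w hn).symm (c, k))) = (k : ℕ) := congrArg Fin.val h2
  rw [h1] at h3
  exact h3

lemma psi_unique (hn : ∀ j : Fin 4, cnt w (4 * n) j = n) {c : Fin 4} {k : Fin n}
    {t : Fin (4 * n)} (h1 : w t = c) (h2 : cnt w (t : ℕ) c = (k : ℕ)) :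
    (wE w hn).symm (c, k) = t := by
  rw [Equiv.symm_apply_eq, wE_apply]
  subst h1
  exact Prod.ext rfl (Fin.ext h2.symm)

lemma psi_lt_same (hn : ∀ j : Fin 4, cnt w (4 * n) j = n) (c : Fin 4) {k k' : Fin n}
    (h : k < k') : (wE w hn).symm (c, k) < (wE w hn).symm (c, k') := by
  obtain ⟨hw, hc⟩ := psi_spec w hn c k
  obtain ⟨hw', hc'⟩ := psi_spec w hn c k'
  have hkk : (k : ℕ) < (k' : ℕ) := h
  rcases lt_trichotomy ((wE w hn).symm (c, k)) ((wE w hn).symm (c, k')) with hlt | heq | hlt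
  · exact hlt
  · exfalso; rw [heq, hc'] at hc; omega
  · exfalso
    have := cnt_lt_cnt w hw' hlt
    rw [hc, hc'] at this
    omega

lemma psi_lt_cross (hn : ∀ j : Fin 4, cnt w (4 * n) j = n) {c c' : Fin 4}
    (hcc : c ≠ c') (hle : ∀ i : ℕ, cnt w i c' ≤ cnt w i c) (k : Fin n) :
    (wE w hn).symm (c, k) < (wE w hn).symm (c', k) := by
  obtain ⟨hw, hc⟩ := psi_spec w hn c k
  obtain ⟨hw', hc'⟩ := psi_spec w hn c' k
  have key : (k : ℕ) + 1 ≤ cnt w (((wE w hn).symm (c', k) : Fin (4 * n)) : ℕ) c := by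
    have h1 := cnt_succ_eq w ((wE w hn).symm (c', k)) hw'
    have h2 := cnt_succ_ne w ((wE w hn).symm (c', k)) (c := c)
      (by rw [hw']; exact hcc.symm)
    have h3 := hle ((((wE w hn).symm (c', k) : Fin (4 * n)) : ℕ) + 1)
    omega
  by_contra hnlt
  have hle' : ((wE w hn).symm (c', k) : Fin (4 * n)) ≤ (wE w hn).symm (c, k) := not_lt.1 hnlt
  have := cnt_mono w (show (((wE w hn).symm (c', k) : Fin (4 * n)) : ℕ) ≤
    (((wE w hn).symm (c, k) : Fin (4 * n)) : ℕ) from hle') c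
  omega


variable {n : ℕ}

lemma d_coe (x : Fin 4 × Fin n) : ((dSh n x : (cylShape211 n)) : ℕ × ℕ × ℕ) = box x.1 (x.2 : ℕ) := rfl

lemma col_inj {c c' : Fin 4} (h : col c = col c') : c = c' := by
  fin_cases c <;> fin_cases c' <;> simp_all [col, Prod.ext_iff]

noncomputable def mkF (w : Fin (4 * n) → Fin 4) (hn : ∀ j : Fin 4, cnt w (4 * n) j = n) :
    (cylShape211 n) → Fin (cylShape211 n).card :=
  ⇑((dSh n).symm.trans ((wE w hn).symm.trans (finCongr (card_shape n).symm)))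

lemma mkF_bij (w : Fin (4 * n) → Fin 4) (hn : ∀ j : Fin 4, cnt w (4 * n) j = n) :
    Function.Bijective (mkF w hn) :=
  Equiv.bijective _

lemma mkF_apply (w : Fin (4 * n) → Fin 4) (hn : ∀ j : Fin 4, cnt w (4 * n) j = n)
    (x : Fin 4 × Fin n) :
    mkF w hn (dSh n x) = finCongr (card_shape n).symm ((wE w hn).symm x) := by
  simp only [mkF, Equiv.coe_trans, Function.comp_apply, Equiv.symm_apply_apply]

lemma mkF_lt (w : Fin (4 * n) → Fin 4) (hn : ∀ j : Fin 4, cnt w (4 * n) j = n)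
    {x y : Fin 4 × Fin n} (h : (wE w hn).symm x < (wE w hn).symm y) :
    mkF w hn (dSh n x) < mkF w hn (dSh n y) := by
  rw [mkF_apply, mkF_apply]
  rw [Fin.lt_def]
  simpa only [finCongr_apply, Fin.coe_cast] using Fin.lt_def.mp h

lemma mkF_ssyt (w : Fin (4 * n) → Fin 4) (hn : ∀ j : Fin 4, cnt w (4 * n) j = n)
    (hB : ∀ i : ℕ, cnt w i 1 ≤ cnt w i 0 ∧ cnt w i 2 ≤ cnt w i 1 ∧
      cnt w i 3 ≤ cnt w i 0) :
    IsSSYT3 (cylShape211 n) (mkF w hn) := by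
  refine ⟨mkF_bij w hn, ?_, ?_, ?_⟩
  · intro a b h2 h1
    obtain ⟨⟨c, k⟩, rfl⟩ := (dSh n).surjective a
    obtain ⟨⟨c', k'⟩, rfl⟩ := (dSh n).surjective b
    rw [d_coe, d_coe] at h2 h1
    simp only [box] at h2 h1
    obtain ⟨hcol, hk⟩ := Prod.ext_iff.mp h2
    cases Fin.ext (hk : (k : ℕ) = (k' : ℕ))
    apply mkF_lt
    fin_cases c <;> fin_cases c' <;>
      first
        | exact psi_lt_cross w hn (by decide) (fun i => (hB i).1) k
        | exact psi_lt_cross w hn (by decide) (fun i => (hB i).2.1) k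
        | exact psi_lt_cross w hn (by decide)
            (fun i => le_trans ((hB i).2.1) ((hB i).1)) k
        | simp_all [col]
  · intro a b h1 h3 h2
    obtain ⟨⟨c, k⟩, rfl⟩ := (dSh n).surjective a
    obtain ⟨⟨c', k'⟩, rfl⟩ := (dSh n).surjective b
    rw [d_coe, d_coe] at h1 h2 h3
    simp only [box] at h1 h2 h3
    cases Fin.ext (h3 : (k : ℕ) = (k' : ℕ))
    apply mkF_lt
    fin_cases c <;> fin_cases c' <;>
      first
        | exact psi_lt_cross w hn (by decide) (fun i => (hB i).2.2) k
        | simp_all [col]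
  · intro a b h1 h2 h3
    obtain ⟨⟨c, k⟩, rfl⟩ := (dSh n).surjective a
    obtain ⟨⟨c', k'⟩, rfl⟩ := (dSh n).surjective b
    rw [d_coe, d_coe] at h1 h2 h3
    simp only [box] at h1 h2 h3
    cases col_inj (Prod.ext h1 h2)
    exact mkF_lt w hn (psi_lt_same w hn c (Fin.lt_def.mpr h3))

section Forward

variable (f : (cylShape211 n) → Fin (cylShape211 n).card) (hbf : Function.Bijective f)

noncomputable def eqv : Fin (4 * n) ≃ (cylShape211 n) :=
  (finCongr (card_shape n).symm).trans (Equiv.ofBijective f hbf).symm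

noncomputable def wOf : Fin (4 * n) → Fin 4 := fun t => colIdx ↑(eqv f hbf t)

lemma eqv_symm_apply (p : (cylShape211 n)) :
    (eqv f hbf).symm p = finCongr (card_shape n) (f p) := rfl

lemma f_eqv (t : Fin (4 * n)) : ((f (eqv f hbf t)) : ℕ) = (t : ℕ) := by
  have h := (eqv f hbf).symm_apply_apply t
  rw [eqv_symm_apply] at h
  have := congrArg Fin.val h
  simpa using this

lemma dSh_symm_fst (p : (cylShape211 n)) :
    ((dSh n).symm p).1 = colIdx (↑p : ℕ × ℕ × ℕ) := by
  have h : ((dSh n ((dSh n).symm p) : (cylShape211 n)) : ℕ × ℕ × ℕ) = ↑p :=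
    congrArg Subtype.val ((dSh n).apply_symm_apply p)
  rw [d_coe] at h
  rw [← h, colIdx_box]

lemma dSh_symm_pair {p : (cylShape211 n)} {c : Fin 4}
    (h : colIdx (↑p : ℕ × ℕ × ℕ) = c) :
    (c, ((dSh n).symm p).2) = (dSh n).symm p :=
  Prod.ext (by rw [dSh_symm_fst, h]) rfl

lemma cnt_wOf (i : ℕ) (c : Fin 4) :
    cnt (wOf f hbf) i c =
      (Finset.univ.filter (fun k : Fin n => ((f (dSh n (c, k))) : ℕ) < i)).card := by
  unfold cnt
  refine Finset.card_bij' (fun t _ => ((dSh n).symm (eqv f hbf t)).2)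
    (fun k _ => (eqv f hbf).symm (dSh n (c, k))) ?_ ?_ ?_ ?_
  · intro t ht
    simp only [Finset.mem_filter, Finset.mem_univ, true_and] at ht ⊢
    obtain ⟨hti, htc⟩ := ht
    have hd : dSh n (c, ((dSh n).symm (eqv f hbf t)).2) = eqv f hbf t := by
      rw [dSh_symm_pair (htc : colIdx _ = c), Equiv.apply_symm_apply]
    rw [hd, f_eqv]
    exact hti
  · intro k hk
    simp only [Finset.mem_filter, Finset.mem_univ, true_and] at hk ⊢
    constructor
    · have : (((eqv f hbf).symm (dSh n (c, k)) : Fin (4 * n)) : ℕ) =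
          ((f (dSh n (c, k))) : ℕ) := by
        rw [eqv_symm_apply]; simp
      rw [this]; exact hk
    · show colIdx ↑(eqv f hbf ((eqv f hbf).symm (dSh n (c, k)))) = c
      rw [Equiv.apply_symm_apply, d_coe, colIdx_box]
  · intro t ht
    simp only [Finset.mem_filter, Finset.mem_univ, true_and] at ht
    have hd : dSh n (c, ((dSh n).symm (eqv f hbf t)).2) = eqv f hbf t := by
      rw [dSh_symm_pair (ht.2 : colIdx _ = c), Equiv.apply_symm_apply]
    show (eqv f hbf).symm (dSh n (c, ((dSh n).symm (eqv f hbf t)).2)) = t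
    rw [hd, Equiv.symm_apply_apply]
  · intro k hk
    show ((dSh n).symm (eqv f hbf ((eqv f hbf).symm (dSh n (c, k))))).2 = k
    rw [Equiv.apply_symm_apply, Equiv.symm_apply_apply]

lemma wOf_total (j : Fin 4) : cnt (wOf f hbf) (4 * n) j = n := by
  rw [cnt_wOf]
  rw [Finset.filter_true_of_mem (fun k _ => by
    have h1 := (f (dSh n (j, k))).isLt
    have h2 := card_shape n
    omega)]
  simp

end Forward

section Forward2

variable (f : (cylShape211 n) → Fin (cylShape211 n).card)

lemma f_lt_cross (hf : IsSSYT3 (cylShape211 n) f) (k : Fin n) :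
    f (dSh n (0, k)) < f (dSh n (1, k)) ∧ f (dSh n (1, k)) < f (dSh n (2, k)) ∧
      f (dSh n (0, k)) < f (dSh n (3, k)) := by
  refine ⟨hf.2.1 _ _ ?_ ?_, hf.2.1 _ _ ?_ ?_, hf.2.2.1 _ _ ?_ ?_ ?_⟩ <;>
    simp [d_coe, box, col]

lemma f_k_iff (hf : IsSSYT3 (cylShape211 n) f) (c : Fin 4) {k k' : Fin n} :
    ((f (dSh n (c, k'))) : ℕ) < ((f (dSh n (c, k))) : ℕ) ↔ (k' : ℕ) < (k : ℕ) := by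
  constructor
  · intro h
    by_contra hle
    rcases Nat.lt_or_ge (k : ℕ) (k' : ℕ) with h1 | h1
    · have := hf.2.2.2 (dSh n (c, k)) (dSh n (c, k')) rfl rfl (by simpa [d_coe, box] using h1)
      have := Fin.lt_def.mp this
      omega
    · have : (k : ℕ) = (k' : ℕ) := by omega
      cases Fin.ext this
      omega
  · intro h
    exact Fin.lt_def.mp
      (hf.2.2.2 (dSh n (c, k')) (dSh n (c, k)) rfl rfl (by simpa [d_coe, box] using h))

lemma wOf_cond (hf : IsSSYT3 (cylShape211 n) f) (i : ℕ) :
    cnt (wOf f hf.1) i 1 ≤ cnt (wOf f hf.1) i 0 ∧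
      cnt (wOf f hf.1) i 2 ≤ cnt (wOf f hf.1) i 1 ∧
      cnt (wOf f hf.1) i 3 ≤ cnt (wOf f hf.1) i 0 := by
  refine ⟨?_, ?_, ?_⟩ <;>
  · rw [cnt_wOf, cnt_wOf]
    apply Finset.card_le_card
    intro k hk
    simp only [Finset.mem_filter, Finset.mem_univ, true_and] at hk ⊢
    have h3 := f_lt_cross f hf k
    have h4 := Fin.lt_def.mp h3.1
    have h5 := Fin.lt_def.mp h3.2.1
    have h6 := Fin.lt_def.mp h3.2.2
    omega

lemma mkF_wOf (hf : IsSSYT3 (cylShape211 n) f) :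
    mkF (wOf f hf.1) (wOf_total f hf.1) = f := by
  funext p
  obtain ⟨⟨c, k⟩, rfl⟩ := (dSh n).surjective p
  rw [mkF_apply]
  have h1 : wOf f hf.1 ((eqv f hf.1).symm (dSh n (c, k))) = c := by
    show colIdx ↑(eqv f hf.1 ((eqv f hf.1).symm (dSh n (c, k)))) = c
    rw [Equiv.apply_symm_apply, d_coe, colIdx_box]
  have h2 : cnt (wOf f hf.1) (((eqv f hf.1).symm (dSh n (c, k)) : Fin (4 * n)) : ℕ) c
      = (k : ℕ) := by
    rw [cnt_wOf]
    have hv : (((eqv f hf.1).symm (dSh n (c, k)) : Fin (4 * n)) : ℕ) =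
        ((f (dSh n (c, k))) : ℕ) := by
      rw [eqv_symm_apply]; simp
    rw [hv]
    have hfil : (Finset.univ.filter
        (fun k' : Fin n => ((f (dSh n (c, k'))) : ℕ) < ((f (dSh n (c, k))) : ℕ)))
        = Finset.Iio k := by
      ext k'
      simp only [Finset.mem_filter, Finset.mem_univ, true_and, Finset.mem_Iio]
      rw [f_k_iff f hf c, Fin.lt_def]
    rw [hfil, Fin.card_Iio]
  have ht0 := psi_unique (wOf f hf.1) (wOf_total f hf.1) h1 h2
  rw [ht0, eqv_symm_apply]
  exact Fin.ext (by simp)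

end Forward2

lemma mkF_inj {w w' : Fin (4 * n) → Fin 4} {hn : ∀ j : Fin 4, cnt w (4 * n) j = n}
    {hn' : ∀ j : Fin 4, cnt w' (4 * n) j = n} (h : mkF w hn = mkF w' hn') : w = w' := by
  have hsym : ∀ x : Fin 4 × Fin n, (wE w hn).symm x = (wE w' hn').symm x := by
    intro x
    have h0 := congrFun h (dSh n x)
    rw [mkF_apply, mkF_apply] at h0
    exact Fin.ext (by simpa using congrArg Fin.val h0)
  funext t
  have h1 : (wE w' hn').symm (wE w hn t) = t := by
    rw [← hsym, Equiv.symm_apply_apply]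
  have h2 := congrArg (wE w' hn') h1
  rw [Equiv.apply_symm_apply] at h2
  have h3 := congrArg Prod.fst h2
  rw [wE_apply, wE_apply] at h3
  exact h3

end SSYTAux

/-- The number of solid standard Young tableaux of shape `(2,1,1) × {1,…,n}`
equals the number of lattice paths from `(0,0,0,0)` to `(n,n,n,n)` with
positive unit steps whose every visited point `(x₁,x₂,x₃,x₄)` satisfies
`x₁ ≥ x₂ ≥ x₃` and `x₁ ≥ x₄`. -/
theorem ssyt3_cyl211_eq_lattice_paths (n : ℕ) :
    ssyt3Count (cylShape211 n) =
      Nat.card {w : Fin (4 * n) → Fin 4 //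
        (∀ i : ℕ, cnt w i 1 ≤ cnt w i 0 ∧ cnt w i 2 ≤ cnt w i 1 ∧
          cnt w i 3 ≤ cnt w i 0) ∧
        (∀ j : Fin 4, cnt w (4 * n) j = n)} := by
  unfold ssyt3Count
  refine (Nat.card_eq_of_bijective
    (fun w => ⟨SSYTAux.mkF w.1 w.2.2, SSYTAux.mkF_ssyt w.1 w.2.2 w.2.1⟩) ⟨?_, ?_⟩).symm
  · rintro ⟨w, hw⟩ ⟨w', hw'⟩ h
    exact Subtype.ext (SSYTAux.mkF_inj (congrArg Subtype.val h))
  · rintro ⟨f, hf⟩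
    exact ⟨⟨SSYTAux.wOf f hf.1, fun i => SSYTAux.wOf_cond f hf i, SSYTAux.wOf_total f hf.1⟩,
      Subtype.ext (SSYTAux.mkF_wOf f hf)⟩
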